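/- Let u₀ : ℝ → ℂ be a Schwartz function, and for Im ζ ≥ 0 define the spectral functions y(ζ) and z(ζ) as in the context. Then y(ζ) = 1 + O(1/ζ) and z(ζ) = O(1/ζ) as ζ → ∞ in the closed upper half-plane: there exist constants C > 0 and R > 0 such that |y(ζ) − 1| ≤ C/|ζ| and |z(ζ)| ≤ C/|ζ| for all ζ with Im ζ ≥ 0 and |ζ| ≥ R. -/

import Mathlib

open MeasureTheory Set Filter Topology

lemma tail_split_aux {E : Type*} [NormedAddCommGroup E] [NormedSpace ℝ E]
    (g : ℝ → E) (hgi : IntegrableOn g (Ioi 0)) {x : ℝ} (hx : 0 ≤ x) :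
    ∫ t in Ioi x, g t = (∫ t in Ioi 0, g t) - ∫ t in (0:ℝ)..x, g t := by
  rw [intervalIntegral.integral_of_le hx]
  have h : (∫ t in Ioc 0 x, g t) + (∫ t in Ioi x, g t) = ∫ t in Ioi 0, g t := by
    rw [← setIntegral_union Ioc_disjoint_Ioi_same measurableSet_Ioi
      (hgi.mono_set Ioc_subset_Ioi_self) (hgi.mono_set (Ioi_subset_Ioi hx)),
      Ioc_union_Ioi_eq_Ioi hx]
  exact eq_sub_of_add_eq' h

lemma tail_hasDerivAt_aux {E : Type*} [NormedAddCommGroup E] [NormedSpace ℝ E] [CompleteSpace E]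
    (g : ℝ → E) (hgi : IntegrableOn g (Ioi 0)) (hgc : ContinuousOn g (Ici 0))
    {x : ℝ} (hx : 0 < x) :
    HasDerivAt (fun t => ∫ s in Ioi t, g s) (-g x) x := by
  have h1 : HasDerivAt (fun t => (∫ s in Ioi 0, g s) - ∫ s in (0:ℝ)..t, g s) (-g x) x := by
    refine HasDerivAt.const_sub _ ?_
    refine intervalIntegral.integral_hasDerivAt_right
      ((intervalIntegrable_iff_integrableOn_Ioc_of_le hx.le).mpr
        (hgi.mono_set Ioc_subset_Ioi_self))
      ((hgc.mono Ioi_subset_Ici_self).stronglyMeasurableAtFilter isOpen_Ioi x hx) ?_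
    exact (hgc.mono Ioi_subset_Ici_self).continuousAt (IsOpen.mem_nhds isOpen_Ioi hx)
  refine h1.congr_of_eventuallyEq ?_
  filter_upwards [IsOpen.mem_nhds isOpen_Ioi hx] with t ht
  exact tail_split_aux g hgi ht.le

lemma gronwall_tail (g φ : ℝ → ℝ)
    (hgi : IntegrableOn g (Ioi 0)) (hgc : ContinuousOn g (Ici 0))
    (hφc : ContinuousOn φ (Ici 0))
    (hgnn : ∀ x, 0 ≤ g x) (hφnn : ∀ x, 0 ≤ φ x)
    (hint : IntegrableOn (fun t => g t * φ t) (Ioi 0))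
    (h : ∀ x ≥ (0:ℝ), φ x ≤ 1 + ∫ t in Ioi x, g t * φ t) :
    ∀ x ≥ (0:ℝ), φ x ≤ (1 + ∫ t in Ioi 0, g t) * Real.exp (∫ t in Ioi 0, g t) := by
  set F : ℝ → ℝ := fun t => ∫ s in Ioi t, g s * φ s with hFdef
  set G : ℝ → ℝ := fun t => ∫ s in Ioi t, g s with hGdef
  set B : ℝ := ∫ s in Ioi 0, g s with hBdef
  have hBnn : 0 ≤ B := setIntegral_nonneg measurableSet_Ioi fun t _ => hgnn t
  set H : ℝ → ℝ := fun t => (1 + F t) * Real.exp (-(G t)) with hHdef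
  have hgφc : ContinuousOn (fun t => g t * φ t) (Ici 0) := hgc.mul hφc
  have hF' : ∀ t : ℝ, 0 < t → HasDerivAt F (-(g t * φ t)) t := fun t ht =>
    tail_hasDerivAt_aux _ hint hgφc ht
  have hG' : ∀ t : ℝ, 0 < t → HasDerivAt G (-(g t)) t := fun t ht =>
    tail_hasDerivAt_aux _ hgi hgc ht
  have hH' : ∀ t : ℝ, 0 < t → HasDerivAt H
      ((-(g t * φ t)) * Real.exp (-(G t)) + (1 + F t) * (Real.exp (-(G t)) * g t)) t := by
    intro t ht
    have := ((hF' t ht).const_add 1).mul ((hG' t ht).neg.exp)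
    refine HasDerivAt.congr_deriv this ?_
    simp only [Pi.neg_apply]; ring
  have hderiv_nonneg : ∀ t : ℝ, 0 < t →
      0 ≤ (-(g t * φ t)) * Real.exp (-(G t)) + (1 + F t) * (Real.exp (-(G t)) * g t) := by
    intro t ht
    have h1 : g t * φ t ≤ g t * (1 + F t) := mul_le_mul_of_nonneg_left (h t ht.le) (hgnn t)
    nlinarith [Real.exp_pos (-(G t))]
  -- monotonicity of H on [x, ∞) for x > 0
  have hmono : ∀ x : ℝ, 0 < x → MonotoneOn H (Ici x) := by
    intro x hx
    refine monotoneOn_of_deriv_nonneg (convex_Ici x) ?_ ?_ ?_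
    · intro t ht
      exact ((hH' t (lt_of_lt_of_le hx ht)).continuousAt).continuousWithinAt
    · intro t ht
      rw [interior_Ici] at ht
      exact ((hH' t (hx.trans ht)).differentiableAt).differentiableWithinAt
    · intro t ht
      rw [interior_Ici] at ht
      rw [(hH' t (hx.trans ht)).deriv]
      exact hderiv_nonneg t (hx.trans ht)
  -- limits at infinity
  have hFtop : Tendsto F atTop (𝓝 0) := by
    have h1 : Tendsto (fun t : ℝ => ∫ s in (0:ℝ)..t, g s * φ s) atTop (𝓝 (F 0)) :=
      intervalIntegral_tendsto_integral_Ioi 0 hint tendsto_id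
    have h2 : Tendsto (fun t : ℝ => F 0 - ∫ s in (0:ℝ)..t, g s * φ s) atTop (𝓝 (F 0 - F 0)) :=
      tendsto_const_nhds.sub h1
    rw [sub_self] at h2
    refine h2.congr' ?_
    filter_upwards [eventually_ge_atTop (0:ℝ)] with t ht
    exact (tail_split_aux _ hint ht).symm
  have hGtop : Tendsto G atTop (𝓝 0) := by
    have h1 : Tendsto (fun t : ℝ => ∫ s in (0:ℝ)..t, g s) atTop (𝓝 (G 0)) :=
      intervalIntegral_tendsto_integral_Ioi 0 hgi tendsto_id
    have h2 : Tendsto (fun t : ℝ => G 0 - ∫ s in (0:ℝ)..t, g s) atTop (𝓝 (G 0 - G 0)) :=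
      tendsto_const_nhds.sub h1
    rw [sub_self] at h2
    refine h2.congr' ?_
    filter_upwards [eventually_ge_atTop (0:ℝ)] with t ht
    exact (tail_split_aux _ hgi ht).symm
  have hHtop : Tendsto H atTop (𝓝 1) := by
    have := ((tendsto_const_nhds (x := (1:ℝ))).add hFtop).mul ((hGtop.neg).rexp)
    simpa using this
  -- key bound for x > 0
  have hGleB : ∀ x : ℝ, 0 ≤ x → G x ≤ B := by
    intro x hx
    refine setIntegral_mono_set hgi ?_ ?_
    · filter_upwards with t using hgnn t
    · exact HasSubset.Subset.eventuallyLE (Ioi_subset_Ioi hx)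
  have key : ∀ x : ℝ, 0 < x → φ x ≤ Real.exp B := by
    intro x hx
    have hHx : H x ≤ 1 := by
      refine ge_of_tendsto hHtop ?_
      filter_upwards [eventually_ge_atTop x] with t ht
      exact hmono x hx (self_mem_Ici) ht ht
    have h2 : 1 + F x ≤ Real.exp (G x) := by
      have e1 : Real.exp (-(G x)) * Real.exp (G x) = 1 := by
        rw [← Real.exp_add, neg_add_cancel, Real.exp_zero]
      calc 1 + F x = (1 + F x) * (Real.exp (-(G x)) * Real.exp (G x)) := by rw [e1, mul_one]
        _ = H x * Real.exp (G x) := by ring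
        _ ≤ 1 * Real.exp (G x) :=
            mul_le_mul_of_nonneg_right hHx (Real.exp_pos _).le
        _ = Real.exp (G x) := one_mul _
    calc φ x ≤ 1 + F x := h x hx.le
      _ ≤ Real.exp (G x) := h2
      _ ≤ Real.exp B := Real.exp_le_exp.mpr (hGleB x hx.le)
  -- conclude
  intro x hx
  rcases eq_or_lt_of_le hx with heq | hlt
  · have hF0 : F 0 ≤ B * Real.exp B := by
      have : F 0 ≤ ∫ s in Ioi (0:ℝ), g s * Real.exp B := by
        refine setIntegral_mono_on hint (hgi.mul_const _) measurableSet_Ioi ?_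
        intro t ht
        exact mul_le_mul_of_nonneg_left (key t ht) (hgnn t)
      rwa [integral_mul_const] at this
    have hφ0 : φ x ≤ 1 + B * Real.exp B := by
      calc φ x ≤ 1 + F x := h x hx
        _ = 1 + F 0 := by rw [← heq]
        _ ≤ 1 + B * Real.exp B := by linarith
    have : (1:ℝ) ≤ Real.exp B := Real.one_le_exp hBnn
    nlinarith
  · have : (1:ℝ) ≤ Real.exp B := Real.one_le_exp hBnn
    have := key x hlt
    nlinarith

-- kernel bound
lemma ker_bound (ζ : ℂ) (him : 0 ≤ ζ.im) {x ξ : ℝ} (h : x ≤ ξ) :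
    ‖Complex.exp (-(2 * Complex.I * ζ * ((x - ξ : ℝ) : ℂ)))‖ ≤ 1 := by
  rw [Complex.norm_exp, Real.exp_le_one_iff]
  have : (-(2 * Complex.I * ζ * ((x - ξ : ℝ) : ℂ))).re = 2 * (x - ξ) * ζ.im := by
    simp [Complex.mul_re, Complex.mul_im]
    ring
  rw [this]
  nlinarith

-- Schwartz decay to 0 at +∞ in norm
lemma schwartz_norm_tendsto (u₀ : SchwartzMap ℝ ℂ) :
    Tendsto (fun ξ : ℝ => ‖u₀ ξ‖) atTop (𝓝 0) := by
  obtain ⟨C₁, -, hC₁⟩ := u₀.decay 1 0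
  refine squeeze_zero_norm' (a := fun ξ : ℝ => C₁ * ξ⁻¹) ?_ ?_
  · filter_upwards [eventually_ge_atTop (1:ℝ)] with ξ hξ
    have h1 := hC₁ ξ
    simp only [pow_one, norm_iteratedFDeriv_zero] at h1
    have hξ0 : (0:ℝ) < ξ := lt_of_lt_of_le one_pos hξ
    rw [Real.norm_eq_abs, abs_of_pos hξ0] at h1
    rw [Real.norm_eq_abs, abs_of_nonneg (norm_nonneg _), mul_comm C₁, ← div_eq_inv_mul,
      le_div_iff₀ hξ0, mul_comm]
    exact h1
  · simpa using tendsto_inv_atTop_zero.const_mul C₁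

lemma v1_decay (u₀ : SchwartzMap ℝ ℂ) (ζ : ℂ) (him : 0 ≤ ζ.im) (hζ : 1 ≤ ‖ζ‖)
    (v₁ v₂ : ℝ → ℂ) (hc1 : ContinuousOn v₁ (Set.Ici 0)) (hc2 : ContinuousOn v₂ (Set.Ici 0))
    (M : ℝ) (hMnn : 0 ≤ M) (hM1 : ∀ ξ ≥ (0:ℝ), ‖v₁ ξ‖ ≤ M) (hM2 : ∀ ξ ≥ (0:ℝ), ‖v₂ ξ‖ ≤ M)
    (heqs : ∀ x ≥ (0 : ℝ),
      IntegrableOn (fun ξ : ℝ =>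
        Complex.exp (-(2 * Complex.I * ζ * ((x - ξ : ℝ) : ℂ))) * u₀ ξ * v₂ ξ) (Set.Ioi x) ∧
      IntegrableOn (fun ξ : ℝ => (starRingEnd ℂ) (u₀ ξ) * v₁ ξ) (Set.Ioi x) ∧
      v₁ x = -∫ ξ in Set.Ioi x,
        Complex.exp (-(2 * Complex.I * ζ * ((x - ξ : ℝ) : ℂ))) * u₀ ξ * v₂ ξ ∧
      v₂ x = 1 + ∫ ξ in Set.Ioi x, (starRingEnd ℂ) (u₀ ξ) * v₁ ξ)
    (S : ℝ) (hS : ∀ t, ‖u₀ t‖ ≤ S)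
    {x : ℝ} (hx : 0 ≤ x) :
    ‖v₁ x‖ ≤ (S * M + ∫ ξ : ℝ,
      (‖(SchwartzMap.derivCLM ℝ ℂ u₀) ξ‖ * M + ‖u₀ ξ‖ * (S * M))) / ‖ζ‖ := by
  have hζ0 : (0:ℝ) < ‖ζ‖ := lt_of_lt_of_le one_pos hζ
  have hSnn : 0 ≤ S := le_trans (norm_nonneg _) (hS 0)
  set c : ℂ := 2 * Complex.I * ζ with hc
  have hcne : c ≠ 0 := by
    refine mul_ne_zero (mul_ne_zero two_ne_zero Complex.I_ne_zero) ?_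
    exact norm_pos_iff.mp hζ0
  have hcnorm : ‖c‖ = 2 * ‖ζ‖ := by
    rw [hc, norm_mul, norm_mul, Complex.norm_I]
    norm_num
  set E : ℝ → ℂ := fun ξ => Complex.exp (-(c * ((x - ξ : ℝ) : ℂ))) with hE
  have hEcont : Continuous E := by
    apply Complex.continuous_exp.comp
    exact (continuous_const.mul (Complex.continuous_ofReal.comp
      (continuous_const.sub continuous_id))).neg
  set u : ℝ → ℂ := fun ξ => E ξ * c⁻¹ with hu
  set w : ℝ → ℂ := fun ξ => u₀ ξ * v₂ ξ with hw
  set w' : ℝ → ℂ := fun ξ =>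
    (SchwartzMap.derivCLM ℝ ℂ u₀) ξ * v₂ ξ + u₀ ξ * (-((starRingEnd ℂ) (u₀ ξ) * v₁ ξ)) with hw'
  set d : ℝ → ℝ := fun ξ => ‖(SchwartzMap.derivCLM ℝ ℂ u₀) ξ‖ * M + ‖u₀ ξ‖ * (S * M) with hd
  have hdnn : ∀ ξ, 0 ≤ d ξ := fun ξ => add_nonneg
    (mul_nonneg (norm_nonneg _) hMnn) (mul_nonneg (norm_nonneg _) (mul_nonneg hSnn hMnn))
  have hdint : Integrable d :=
    (((SchwartzMap.derivCLM ℝ ℂ u₀).integrable).norm.mul_const M).add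
      ((u₀.integrable).norm.mul_const (S*M))
  -- derivative of v₂
  have hg₂i : IntegrableOn (fun ξ : ℝ => (starRingEnd ℂ) (u₀ ξ) * v₁ ξ) (Set.Ioi 0) :=
    (heqs 0 le_rfl).2.1
  have hg₂c : ContinuousOn (fun ξ : ℝ => (starRingEnd ℂ) (u₀ ξ) * v₁ ξ) (Set.Ici 0) :=
    ((Complex.continuous_conj.comp u₀.continuous).continuousOn).mul hc1
  have hv2' : ∀ ξ : ℝ, 0 < ξ → HasDerivAt v₂ (-((starRingEnd ℂ) (u₀ ξ) * v₁ ξ)) ξ := by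
    intro ξ hξ
    have ht := (tail_hasDerivAt_aux _ hg₂i hg₂c hξ).const_add 1
    refine ht.congr_of_eventuallyEq ?_
    filter_upwards [isOpen_Ioi.mem_nhds hξ] with t (ht' : 0 < t)
    exact (heqs t ht'.le).2.2.2
  -- derivative of u
  have hu' : ∀ ξ : ℝ, HasDerivAt u (E ξ) ξ := by
    intro ξ
    have h1 : HasDerivAt (fun t : ℝ => ((x - t : ℝ) : ℂ)) (-1) ξ := by
      have heq : (fun t : ℝ => ((x - t : ℝ) : ℂ)) = fun t : ℝ => (x:ℂ) - Complex.ofRealCLM t := by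
        funext t; simp
      rw [heq]
      simpa using (Complex.ofRealCLM.hasDerivAt (x := ξ)).const_sub ((x:ℂ))
    have h2 : HasDerivAt (fun t : ℝ => -(c * ((x - t:ℝ):ℂ))) c ξ := by
      have := (h1.const_mul c).neg
      exact this.congr_deriv (by ring)
    have h4 := h2.cexp.mul_const c⁻¹
    have : Complex.exp (-(c * ((x - ξ:ℝ):ℂ))) * c * c⁻¹ = E ξ := by
      rw [mul_assoc, mul_inv_cancel₀ hcne, mul_one]
    rw [this] at h4
    exact h4
  -- norm bounds on kernel
  have hEle : ∀ ξ : ℝ, x ≤ ξ → ‖E ξ‖ ≤ 1 := fun ξ h => ker_bound ζ him h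
  have hule : ∀ ξ : ℝ, x ≤ ξ → ‖u ξ‖ ≤ (2 * ‖ζ‖)⁻¹ := by
    intro ξ h
    rw [hu]
    calc ‖E ξ * c⁻¹‖ = ‖E ξ‖ * ‖c‖⁻¹ := by rw [norm_mul, norm_inv]
      _ ≤ 1 * (2 * ‖ζ‖)⁻¹ := by
          refine mul_le_mul (hEle ξ h) ?_ (by positivity) zero_le_one
          rw [hcnorm]
      _ = (2 * ‖ζ‖)⁻¹ := one_mul _
  have hule1 : ∀ ξ : ℝ, x ≤ ξ → ‖u ξ‖ ≤ 1 := by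
    intro ξ h
    refine le_trans (hule ξ h) ?_
    rw [inv_le_one_iff₀]
    right; linarith
  -- derivative of w
  have hu₀d : ∀ ξ : ℝ, HasDerivAt u₀ ((SchwartzMap.derivCLM ℝ ℂ u₀) ξ) ξ := by
    intro ξ
    rw [SchwartzMap.derivCLM_apply]
    exact (u₀.differentiable.differentiableAt).hasDerivAt
  have hwderiv : ∀ ξ ∈ Ioi x, HasDerivAt w (w' ξ) ξ := fun ξ hξ =>
    (hu₀d ξ).mul (hv2' ξ (lt_of_le_of_lt hx hξ))
  have hw'le : ∀ ξ : ℝ, 0 ≤ ξ → ‖w' ξ‖ ≤ d ξ := by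
    intro ξ hξ
    rw [hw', hd]
    refine le_trans (norm_add_le _ _) (add_le_add ?_ ?_)
    · rw [norm_mul]
      exact mul_le_mul_of_nonneg_left (hM2 ξ hξ) (norm_nonneg _)
    · rw [norm_mul, norm_neg, norm_mul, RCLike.norm_conj]
      refine mul_le_mul_of_nonneg_left ?_ (norm_nonneg _)
      exact mul_le_mul (hS ξ) (hM1 ξ hξ) (norm_nonneg _) hSnn
  -- continuity of w and w'
  have hIoi_sub : Ioi x ⊆ Ici (0:ℝ) := fun t ht => le_trans hx (le_of_lt ht)
  have hwcont : ContinuousOn w (Ici 0) := (u₀.continuous.continuousOn).mul hc2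
  have hw'cont : ContinuousOn w' (Ici 0) :=
    (((SchwartzMap.derivCLM ℝ ℂ u₀).continuous.continuousOn).mul hc2).add
      ((u₀.continuous.continuousOn).mul hg₂c.neg)
  -- integrability of u * w'
  have huw'int : IntegrableOn (fun ξ => u ξ * w' ξ) (Ioi x) := by
    refine Integrable.mono' (hdint.integrableOn) ?_ ?_
    · refine ((((hEcont.mul continuous_const).continuousOn).mul hw'cont).aestronglyMeasurable
        measurableSet_Ici).mono_measure (Measure.restrict_mono hIoi_sub le_rfl)
    · rw [ae_restrict_iff' measurableSet_Ioi]
      filter_upwards with ξ hξ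
      rw [norm_mul]
      calc ‖u ξ‖ * ‖w' ξ‖ ≤ 1 * d ξ :=
            mul_le_mul (hule1 ξ (le_of_lt hξ)) (hw'le ξ (hIoi_sub hξ)) (norm_nonneg _) zero_le_one
        _ = d ξ := one_mul _
  -- integrability of E * w
  have hEwint : IntegrableOn (fun ξ => E ξ * w ξ) (Ioi x) := by
    have h0 := (heqs x hx).1
    have heq : (fun ξ : ℝ => Complex.exp (-(2 * Complex.I * ζ * ((x - ξ : ℝ) : ℂ)))
        * u₀ ξ * v₂ ξ) = fun ξ => E ξ * w ξ := by
      funext ξ; rw [hE, hw, hc]; ring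
    rwa [heq] at h0
  -- boundary limits
  have h_zero : Tendsto (fun ξ => u ξ * w ξ) (𝓝[>] x) (𝓝 (u x * w x)) := by
    have hu_c : ContinuousWithinAt u (Ioi x) x :=
      ((hEcont.mul continuous_const).continuousAt).continuousWithinAt
    have hw_c : ContinuousWithinAt w (Ioi x) x :=
      (hwcont x (mem_Ici.mpr hx)).mono hIoi_sub
    exact hu_c.mul hw_c
  have h_infty : Tendsto (fun ξ => u ξ * w ξ) atTop (𝓝 0) := by
    refine squeeze_zero_norm' (a := fun ξ => ‖u₀ ξ‖ * M) ?_ ?_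
    · filter_upwards [eventually_ge_atTop x] with ξ hξ
      have hξ0 : (0:ℝ) ≤ ξ := le_trans hx hξ
      calc ‖u ξ * w ξ‖ = ‖u ξ‖ * (‖u₀ ξ‖ * ‖v₂ ξ‖) := by
            rw [norm_mul, hw]; simp [norm_mul]
        _ ≤ 1 * (‖u₀ ξ‖ * M) := by
            refine mul_le_mul (hule1 ξ hξ) ?_ (by positivity) zero_le_one
            exact mul_le_mul_of_nonneg_left (hM2 ξ hξ0) (norm_nonneg _)
        _ = ‖u₀ ξ‖ * M := one_mul _
    · simpa using (schwartz_norm_tendsto u₀).mul_const M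
  -- integration by parts
  have hibp := integral_Ioi_mul_deriv_eq_deriv_mul (u := u) (v := w) (u' := E) (v' := w')
    (fun ξ _ => hu' ξ) hwderiv huw'int hEwint h_zero h_infty
  -- rewrite the Volterra equation
  have hv1eq : v₁ x = -∫ ξ in Ioi x, E ξ * w ξ := by
    have h0 := (heqs x hx).2.2.1
    have heq2 : (fun ξ : ℝ => Complex.exp (-(2 * Complex.I * ζ * ((x - ξ : ℝ) : ℂ)))
        * u₀ ξ * v₂ ξ) = fun ξ => E ξ * w ξ := by
      funext ξ; rw [hE, hw, hc]; ring
    rwa [heq2] at h0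
  have hv1eq2 : v₁ x = u x * w x + ∫ ξ in Ioi x, u ξ * w' ξ := by
    rw [hv1eq]
    linear_combination -hibp
  -- final estimate
  set AD : ℝ := ∫ ξ : ℝ, d ξ with hAD
  have hADnn : 0 ≤ AD := integral_nonneg hdnn
  have hb1 : ‖u x * w x‖ ≤ (2 * ‖ζ‖)⁻¹ * (S * M) := by
    rw [norm_mul]
    refine mul_le_mul (hule x le_rfl) ?_ (norm_nonneg _) (by positivity)
    rw [hw, norm_mul]
    exact mul_le_mul (hS x) (hM2 x hx) (norm_nonneg _) hSnn
  have hb2 : ‖∫ ξ in Ioi x, u ξ * w' ξ‖ ≤ (2 * ‖ζ‖)⁻¹ * AD := by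
    refine le_trans (norm_integral_le_integral_norm _) ?_
    have step : (∫ ξ in Ioi x, ‖u ξ * w' ξ‖) ≤ ∫ ξ in Ioi x, (2 * ‖ζ‖)⁻¹ * d ξ := by
      refine setIntegral_mono_on huw'int.norm ((hdint.integrableOn).const_mul _)
        measurableSet_Ioi ?_
      intro ξ hξ
      rw [norm_mul]
      exact mul_le_mul (hule ξ (le_of_lt hξ)) (hw'le ξ (hIoi_sub hξ)) (norm_nonneg _)
        (by positivity)
    refine le_trans step ?_
    rw [integral_const_mul]
    refine mul_le_mul_of_nonneg_left ?_ (by positivity)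
    exact setIntegral_le_integral hdint (Eventually.of_forall hdnn)
  have hinv : (2 * ‖ζ‖)⁻¹ ≤ ‖ζ‖⁻¹ := by
    refine inv_anti₀ hζ0 (by linarith)
  have harr : (2 * ‖ζ‖)⁻¹ * (S * M) + (2 * ‖ζ‖)⁻¹ * AD = (S * M + AD) * (2 * ‖ζ‖)⁻¹ := by
    ring
  have h5 : ‖v₁ x‖ ≤ (2 * ‖ζ‖)⁻¹ * (S * M) + (2 * ‖ζ‖)⁻¹ * AD := by
    rw [hv1eq2]
    exact le_trans (norm_add_le _ _) (add_le_add hb1 hb2)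
  have h6 : (S * M + AD) * (2 * ‖ζ‖)⁻¹ ≤ (S * M + AD) * ‖ζ‖⁻¹ :=
    mul_le_mul_of_nonneg_left hinv (add_nonneg (mul_nonneg hSnn hMnn) hADnn)
  rw [div_eq_mul_inv]
  linarith

lemma uniform_bound (u₀ : SchwartzMap ℝ ℂ) (ζ : ℂ) (him : 0 ≤ ζ.im)
    (v₁ v₂ : ℝ → ℂ) (hc1 : ContinuousOn v₁ (Set.Ici 0)) (hc2 : ContinuousOn v₂ (Set.Ici 0))
    (hbdd : ∃ C : ℝ, ∀ x ≥ (0:ℝ), ‖v₁ x‖ ≤ C ∧ ‖v₂ x‖ ≤ C)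
    (heqs : ∀ x ≥ (0 : ℝ),
      IntegrableOn (fun ξ : ℝ =>
        Complex.exp (-(2 * Complex.I * ζ * ((x - ξ : ℝ) : ℂ))) * u₀ ξ * v₂ ξ) (Set.Ioi x) ∧
      IntegrableOn (fun ξ : ℝ => (starRingEnd ℂ) (u₀ ξ) * v₁ ξ) (Set.Ioi x) ∧
      v₁ x = -∫ ξ in Set.Ioi x,
        Complex.exp (-(2 * Complex.I * ζ * ((x - ξ : ℝ) : ℂ))) * u₀ ξ * v₂ ξ ∧
      v₂ x = 1 + ∫ ξ in Set.Ioi x, (starRingEnd ℂ) (u₀ ξ) * v₁ ξ) :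
    ∀ x ≥ (0:ℝ), ‖v₁ x‖ + ‖v₂ x‖ ≤
      (1 + ∫ s in Ioi (0:ℝ), 2 * ‖u₀ s‖) * Real.exp (∫ s in Ioi (0:ℝ), 2 * ‖u₀ s‖) := by
  obtain ⟨C, hC⟩ := hbdd
  have hCnn : (0:ℝ) ≤ C := le_trans (norm_nonneg _) (hC 0 le_rfl).1
  set φ : ℝ → ℝ := fun ξ => ‖v₁ ξ‖ + ‖v₂ ξ‖ with hφ
  have hφc : ContinuousOn φ (Ici 0) := hc1.norm.add hc2.norm
  have hφnn : ∀ ξ, 0 ≤ φ ξ := fun ξ => add_nonneg (norm_nonneg _) (norm_nonneg _)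
  have haφ : IntegrableOn (fun ξ => ‖u₀ ξ‖ * φ ξ) (Ioi 0) := by
    refine Integrable.mono' ((u₀.integrable.norm.mul_const (2*C)).integrableOn) ?_ ?_
    · exact ((u₀.continuous.norm.continuousOn.mul hφc).aestronglyMeasurable
        measurableSet_Ici).mono_measure (Measure.restrict_mono Ioi_subset_Ici_self le_rfl)
    · rw [ae_restrict_iff' measurableSet_Ioi]
      filter_upwards with ξ hξ
      rw [Real.norm_of_nonneg (mul_nonneg (norm_nonneg _) (hφnn ξ))]
      refine mul_le_mul_of_nonneg_left ?_ (norm_nonneg _)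
      have h1 := hC ξ (le_of_lt hξ)
      rw [hφ]
      simp only []
      linarith [h1.1, h1.2]
  have hv1le : ∀ x ≥ (0:ℝ), ‖v₁ x‖ ≤ ∫ ξ in Ioi x, ‖u₀ ξ‖ * φ ξ := by
    intro x hx
    rw [(heqs x hx).2.2.1, norm_neg]
    refine le_trans (norm_integral_le_integral_norm _) ?_
    refine setIntegral_mono_on ((heqs x hx).1.norm)
      (haφ.mono_set (Ioi_subset_Ioi hx)) measurableSet_Ioi ?_
    intro ξ hξ
    calc ‖Complex.exp (-(2 * Complex.I * ζ * ((x - ξ : ℝ) : ℂ))) * u₀ ξ * v₂ ξ‖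
        = ‖Complex.exp (-(2 * Complex.I * ζ * ((x - ξ : ℝ) : ℂ)))‖ * ‖u₀ ξ‖ * ‖v₂ ξ‖ := by
          rw [norm_mul, norm_mul]
      _ ≤ 1 * ‖u₀ ξ‖ * ‖v₂ ξ‖ := by
          refine mul_le_mul_of_nonneg_right (mul_le_mul_of_nonneg_right
            (ker_bound ζ him (le_of_lt hξ)) (norm_nonneg _)) (norm_nonneg _)
      _ = ‖u₀ ξ‖ * ‖v₂ ξ‖ := by rw [one_mul]
      _ ≤ ‖u₀ ξ‖ * φ ξ := by
          refine mul_le_mul_of_nonneg_left ?_ (norm_nonneg _)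
          rw [hφ]; simp only []; linarith [norm_nonneg (v₁ ξ)]
  have hv2le : ∀ x ≥ (0:ℝ), ‖v₂ x‖ ≤ 1 + ∫ ξ in Ioi x, ‖u₀ ξ‖ * φ ξ := by
    intro x hx
    rw [(heqs x hx).2.2.2]
    refine le_trans (norm_add_le _ _) ?_
    rw [norm_one]
    refine add_le_add_right ?_ 1
    refine le_trans (norm_integral_le_integral_norm _) ?_
    refine setIntegral_mono_on ((heqs x hx).2.1.norm)
      (haφ.mono_set (Ioi_subset_Ioi hx)) measurableSet_Ioi ?_
    intro ξ hξ
    rw [norm_mul, RCLike.norm_conj]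
    refine mul_le_mul_of_nonneg_left ?_ (norm_nonneg _)
    rw [hφ]; simp only []; linarith [norm_nonneg (v₂ ξ)]
  refine gronwall_tail (fun s => 2 * ‖u₀ s‖) φ
    ((u₀.integrable.norm.const_mul 2).integrableOn)
    ((continuous_const.mul u₀.continuous.norm).continuousOn) hφc
    (fun s => by positivity) hφnn
    (by have := haφ.const_mul 2; simp only [mul_assoc]; exact this) ?_
  intro x hx
  have hsplit : (∫ ξ in Ioi x, 2 * ‖u₀ ξ‖ * φ ξ) = 2 * ∫ ξ in Ioi x, ‖u₀ ξ‖ * φ ξ := by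
    simp_rw [mul_assoc]
    exact integral_const_mul 2 _
  have h1 := hv1le x hx
  have h2 := hv2le x hx
  rw [hφ]; simp only []
  rw [hsplit]
  linarith

/-- The pair `(v₁, v₂)` is a bounded continuous solution on `[0,∞)` of the Volterra system
`v₁(x) = −∫ₓ^∞ e^{−2iζ(x−ξ)} u₀(ξ) v₂(ξ) dξ`,
`v₂(x) = 1 + ∫ₓ^∞ conj(u₀(ξ)) v₁(ξ) dξ`, with all integrals converging absolutely. -/
def IsVolterraSol (u₀ : SchwartzMap ℝ ℂ) (ζ : ℂ) (v : (ℝ → ℂ) × (ℝ → ℂ)) : Prop :=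
  ContinuousOn v.1 (Set.Ici 0) ∧ ContinuousOn v.2 (Set.Ici 0) ∧
  (∃ C : ℝ, ∀ x ≥ (0 : ℝ), ‖v.1 x‖ ≤ C ∧ ‖v.2 x‖ ≤ C) ∧
  ∀ x ≥ (0 : ℝ),
    IntegrableOn
      (fun ξ : ℝ => Complex.exp (-(2 * Complex.I * ζ * ((x - ξ : ℝ) : ℂ))) * u₀ ξ * v.2 ξ)
      (Set.Ioi x) ∧
    IntegrableOn (fun ξ : ℝ => (starRingEnd ℂ) (u₀ ξ) * v.1 ξ) (Set.Ioi x) ∧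
    v.1 x =
      -∫ ξ in Set.Ioi x, Complex.exp (-(2 * Complex.I * ζ * ((x - ξ : ℝ) : ℂ))) * u₀ ξ * v.2 ξ ∧
    v.2 x = 1 + ∫ ξ in Set.Ioi x, (starRingEnd ℂ) (u₀ ξ) * v.1 ξ

/-- the spectral functions `y(ζ) = v₂(0,ζ)` and `z(ζ) = v₁(0,ζ)` satisfy
`y(ζ) = 1 + O(1/ζ)` and `z(ζ) = O(1/ζ)` as `ζ → ∞` in the closed upper half-plane: there are
constants `C > 0` and `R > 0` with `|y(ζ) − 1| ≤ C/|ζ|` and `|z(ζ)| ≤ C/|ζ|` whenever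
`Im ζ ≥ 0` and `|ζ| ≥ R`. -/
theorem stmt_17 (u₀ : SchwartzMap ℝ ℂ) (V : ℂ → (ℝ → ℂ) × (ℝ → ℂ))
    (hV : ∀ ζ : ℂ, 0 ≤ ζ.im → IsVolterraSol u₀ ζ (V ζ)) :
    ∃ C > (0 : ℝ), ∃ R > (0 : ℝ), ∀ ζ : ℂ, 0 ≤ ζ.im → R ≤ ‖ζ‖ →
      ‖(V ζ).2 0 - 1‖ ≤ C / ‖ζ‖ ∧ ‖(V ζ).1 0‖ ≤ C / ‖ζ‖ := by
  obtain ⟨S, -, hS'⟩ := u₀.decay 0 0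
  have hS : ∀ t : ℝ, ‖u₀ t‖ ≤ S := by
    intro t
    simpa [norm_iteratedFDeriv_zero] using hS' t
  have hSnn : 0 ≤ S := le_trans (norm_nonneg _) (hS 0)
  set B : ℝ := ∫ s in Ioi (0:ℝ), 2 * ‖u₀ s‖ with hB
  have hBnn : 0 ≤ B :=
    setIntegral_nonneg measurableSet_Ioi fun s _ => by positivity
  set M : ℝ := (1 + B) * Real.exp B with hM
  have hMnn : 0 ≤ M := by positivity
  set AD : ℝ := ∫ ξ : ℝ, (‖(SchwartzMap.derivCLM ℝ ℂ u₀) ξ‖ * M + ‖u₀ ξ‖ * (S * M)) with hAD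
  have hADnn : 0 ≤ AD := integral_nonneg fun ξ => by positivity
  set K : ℝ := S * M + AD with hK
  have hKnn : 0 ≤ K := add_nonneg (mul_nonneg hSnn hMnn) hADnn
  set A : ℝ := ∫ s in Ioi (0:ℝ), ‖u₀ s‖ with hA
  have hAnn : 0 ≤ A := setIntegral_nonneg measurableSet_Ioi fun s _ => norm_nonneg _
  refine ⟨A * K + K + 1, by positivity, 1, one_pos, ?_⟩
  intro ζ him hζ
  have hζ0 : (0:ℝ) < ‖ζ‖ := lt_of_lt_of_le one_pos hζ
  obtain ⟨hc1, hc2, hbdd, heqs⟩ := hV ζ him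
  have hφ := uniform_bound u₀ ζ him _ _ hc1 hc2 hbdd heqs
  have hM1 : ∀ ξ ≥ (0:ℝ), ‖(V ζ).1 ξ‖ ≤ M := by
    intro ξ hξ
    have := hφ ξ hξ
    rw [hM, hB]
    linarith [norm_nonneg ((V ζ).2 ξ)]
  have hM2 : ∀ ξ ≥ (0:ℝ), ‖(V ζ).2 ξ‖ ≤ M := by
    intro ξ hξ
    have := hφ ξ hξ
    rw [hM, hB]
    linarith [norm_nonneg ((V ζ).1 ξ)]
  have hv1b : ∀ x ≥ (0:ℝ), ‖(V ζ).1 x‖ ≤ K / ‖ζ‖ := by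
    intro x hx
    have := v1_decay u₀ ζ him hζ _ _ hc1 hc2 M hMnn hM1 hM2 heqs S hS hx
    rw [hK, hAD]
    exact this
  constructor
  · -- y(ζ) bound
    have heq0 := (heqs 0 le_rfl).2.2.2
    have hsub : (V ζ).2 0 - 1 = ∫ ξ in Ioi (0:ℝ), (starRingEnd ℂ) (u₀ ξ) * (V ζ).1 ξ := by
      rw [heq0]; ring
    rw [hsub]
    have hbd : ‖∫ ξ in Ioi (0:ℝ), (starRingEnd ℂ) (u₀ ξ) * (V ζ).1 ξ‖ ≤ A * (K / ‖ζ‖) := by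
      refine le_trans (norm_integral_le_integral_norm _) ?_
      have step : (∫ ξ in Ioi (0:ℝ), ‖(starRingEnd ℂ) (u₀ ξ) * (V ζ).1 ξ‖)
          ≤ ∫ ξ in Ioi (0:ℝ), ‖u₀ ξ‖ * (K / ‖ζ‖) := by
        refine setIntegral_mono_on ((heqs 0 le_rfl).2.1.norm)
          ((u₀.integrable.norm.mul_const _).integrableOn) measurableSet_Ioi ?_
        intro ξ hξ
        rw [norm_mul, RCLike.norm_conj]
        exact mul_le_mul_of_nonneg_left (hv1b ξ (le_of_lt hξ)) (norm_nonneg _)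
      refine le_trans step ?_
      rw [integral_mul_const]
    calc ‖∫ ξ in Ioi (0:ℝ), (starRingEnd ℂ) (u₀ ξ) * (V ζ).1 ξ‖
        ≤ A * (K / ‖ζ‖) := hbd
      _ = (A * K) / ‖ζ‖ := by rw [mul_div_assoc]
      _ ≤ (A * K + K + 1) / ‖ζ‖ := by
          apply div_le_div_of_nonneg_right (by linarith) hζ0.le
  · refine le_trans (hv1b 0 le_rfl) ?_
    apply div_le_div_of_nonneg_right (by linarith [mul_nonneg hAnn hKnn]) hζ0.le
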